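/- Let U ⊆ ℂ be a nonempty open connected set and p ∈ ℂ with U + p = U. Let Ξ : ℂ → ℂ be analytic on U, nonvanishing on U, with Ξ(x + p) = Ξ(x) for all x ∈ U, and let Λ : ℂ → ℂ be analytic on U, nonvanishing on U, with Λ'(x)·Ξ(x) = (1/2)·Λ(x)·Ξ'(x) for all x ∈ U. Then there exists ε ∈ {1, −1} such that Λ(x + p) = ε·Λ(x) for all x ∈ U. -/

import Mathlib

open Metric

/-- A function analytic on an open preconnected set with vanishing derivative is constant. -/
lemma const_of_deriv_zero_aux {f : ℂ → ℂ} {U : Set ℂ} (hUo : IsOpen U)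
    (hUc : IsPreconnected U) (hf : AnalyticOnNhd ℂ f U)
    (hd : ∀ x ∈ U, deriv f x = 0) {x : ℂ} (hx : x ∈ U) :
    ∀ y ∈ U, f y = f x := by
  have hev : f =ᶠ[nhds x] fun _ => f x := by
    obtain ⟨ε, hε, hsub⟩ := Metric.isOpen_iff.1 hUo x hx
    have hdiff : DifferentiableOn ℂ f (ball x ε) := fun z hz =>
      ((hf z (hsub hz)).differentiableAt).differentiableWithinAt
    have hfd : ∀ z ∈ ball x ε, fderivWithin ℂ f (ball x ε) z = 0 := by
      intro z hz
      rw [fderivWithin_of_isOpen isOpen_ball hz]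
      have h1 := ((hf z (hsub hz)).differentiableAt).hasDerivAt
      rw [hd z (hsub hz)] at h1
      have h2 : HasFDerivAt f (0 : ℂ →L[ℂ] ℂ) z := by
        have h := h1.hasFDerivAt
        rwa [ContinuousLinearMap.toSpanSingleton_zero] at h
      exact h2.fderiv
    filter_upwards [isOpen_ball.mem_nhds (mem_ball_self hε)] with z hz
    exact (convex_ball x ε).is_const_of_fderivWithin_eq_zero hdiff hfd hz (mem_ball_self hε)
  intro y hy
  exact hf.eqOn_of_preconnected_of_eventuallyEq analyticOnNhd_const hUc hx hev hy

/-- If `Q = 0` (i.e. `Λ' Ξ = (1/2) Λ Ξ'`) and `Ξ` is `p`-periodic, then `Λ` has multiplier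
`±1` under the translation by the period `p`. -/
theorem multiplier_pm_one_when_Q_zero
    (U : Set ℂ) (hU : IsOpen U) (hne : U.Nonempty) (hconn : IsConnected U)
    (p : ℂ) (hUp : (· + p) '' U = U)
    (Ξ Λ : ℂ → ℂ)
    (hΞ : AnalyticOnNhd ℂ Ξ U) (hΞ0 : ∀ x ∈ U, Ξ x ≠ 0)
    (hΞp : ∀ x ∈ U, Ξ (x + p) = Ξ x)
    (hΛ : AnalyticOnNhd ℂ Λ U) (hΛ0 : ∀ x ∈ U, Λ x ≠ 0)
    (hrel : ∀ x ∈ U, deriv Λ x * Ξ x = (1/2) * Λ x * deriv Ξ x) :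
    ∃ ε : ℂ, (ε = 1 ∨ ε = -1) ∧ ∀ x ∈ U, Λ (x + p) = ε * Λ x := by
  have hUc : IsPreconnected U := hconn.isPreconnected
  have hmemp : ∀ x ∈ U, x + p ∈ U := by
    intro x hx
    rw [← hUp]
    exact ⟨x, hx, rfl⟩
  -- the function F = Λ²/Ξ
  set F : ℂ → ℂ := fun x => Λ x * Λ x / Ξ x with hF
  have hFan : AnalyticOnNhd ℂ F U := (hΛ.mul hΛ).div hΞ hΞ0
  have hFd : ∀ x ∈ U, deriv F x = 0 := by
    intro x hx
    have hΛd : HasDerivAt Λ (deriv Λ x) x := (hΛ x hx).differentiableAt.hasDerivAt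
    have hΞd : HasDerivAt Ξ (deriv Ξ x) x := (hΞ x hx).differentiableAt.hasDerivAt
    have hFD : HasDerivAt F
        (((deriv Λ x * Λ x + Λ x * deriv Λ x) * Ξ x - Λ x * Λ x * deriv Ξ x) / Ξ x ^ 2) x :=
      (hΛd.mul hΛd).div hΞd (hΞ0 x hx)
    rw [hFD.deriv]
    have hr := hrel x hx
    have hnum : (deriv Λ x * Λ x + Λ x * deriv Λ x) * Ξ x - Λ x * Λ x * deriv Ξ x = 0 := by
      have : deriv Λ x * Ξ x * 2 = Λ x * deriv Ξ x := by
        rw [hr]; ring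
      linear_combination 2 * Λ x * hr
    rw [hnum, zero_div]
  obtain ⟨z₀, hz₀⟩ := hne
  -- F is constant, hence Λ(x+p)² = Λ(x)²
  have hsq : ∀ x ∈ U, Λ (x + p) * Λ (x + p) = Λ x * Λ x := by
    intro x hx
    have h1 := const_of_deriv_zero_aux hU hUc hFan hFd hz₀ x hx
    have h2 := const_of_deriv_zero_aux hU hUc hFan hFd hz₀ (x + p) (hmemp x hx)
    have h3 : F (x + p) = F x := h2.trans h1.symm
    have hΞx := hΞ0 x hx
    rw [hF] at h3
    simp only [hΞp x hx] at h3
    field_simp at h3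
    linear_combination h3
  set ε : ℂ := Λ (z₀ + p) / Λ z₀ with hε
  have hΛz₀ := hΛ0 z₀ hz₀
  have hεsq : ε * ε = 1 := by
    rw [hε, div_mul_div_comm, hsq z₀ hz₀, div_self (mul_ne_zero hΛz₀ hΛz₀)]
  have hεpm : ε = 1 ∨ ε = -1 := mul_self_eq_one_iff.1 hεsq
  refine ⟨ε, hεpm, ?_⟩
  have hε0 : ε ≠ 0 := by rcases hεpm with h | h <;> simp [h]
  -- f := Λ(·+p) - ε Λ is analytic on U and vanishes near z₀
  set f : ℂ → ℂ := fun x => Λ (x + p) - ε * Λ x with hf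
  have hΛp : AnalyticOnNhd ℂ (fun x => Λ (x + p)) U := by
    intro x hx
    have hadd : AnalyticAt ℂ (fun y : ℂ => y + p) x :=
      (analyticAt_id.add analyticAt_const : AnalyticAt ℂ (fun y : ℂ => y + p) x)
    exact AnalyticAt.comp (g := Λ) (f := fun y : ℂ => y + p)
      (hΛ (x + p) (hmemp x hx)) hadd
  have hfan : AnalyticOnNhd ℂ f U := hΛp.sub (analyticOnNhd_const.mul hΛ)
  set g : ℂ → ℂ := fun x => Λ (x + p) + ε * Λ x with hg
  have hgz₀ : g z₀ ≠ 0 := by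
    have : Λ (z₀ + p) = ε * Λ z₀ := by
      rw [hε]; field_simp
    rw [hg]
    simp only [this]
    rw [← two_mul, ← mul_assoc]
    exact mul_ne_zero (mul_ne_zero two_ne_zero hε0) hΛz₀
  have hgan : AnalyticOnNhd ℂ g U := hΛp.add (analyticOnNhd_const.mul hΛ)
  have hgcont : ContinuousAt g z₀ := (hgan z₀ hz₀).continuousAt
  have hgne : ∀ᶠ z in nhds z₀, g z ≠ 0 := hgcont.eventually_ne hgz₀
  have hfg : ∀ x ∈ U, f x * g x = 0 := by
    intro x hx
    have := hsq x hx
    have hε2 : ε * ε = 1 := hεsq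
    rw [hf, hg]
    linear_combination this - Λ x * Λ x * hε2
  have hfev : f =ᶠ[nhds z₀] 0 := by
    filter_upwards [hgne, hU.mem_nhds hz₀] with z hgz hzU
    have := hfg z hzU
    exact (mul_eq_zero.1 this).resolve_right hgz
  have hfzero := hfan.eqOn_zero_of_preconnected_of_eventuallyEq_zero hUc hz₀ hfev
  intro x hx
  have := hfzero hx
  simp only [hf, Pi.zero_apply] at this
  exact sub_eq_zero.1 this
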